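/- arXiv:2509.14914 — 6 statements merged into one kernel-verified Lean document; each statement's English description precedes it below -/
import Mathlib

section
/- Let (V, 0) be a finitely generated B-scalar algebra and let H₁ and H₂ be finite pair-independent generating sets of (V, 0). Then |H₁| = |H₂|. -/
/-- A `B`-scalar algebra over a commutative semifield `B`. -/
class ScalarAlgebra (B : Type*) (V : Type*) [Semifield B] extends SMul B V, Zero V where
  mul_smul : ∀ (b b' : B) (v : V), (b * b') • v = b • (b' • v)
  one_smul : ∀ v : V, (1 : B) • v = v
  smul_zero : ∀ b : B, b • (0 : V) = 0
  zero_smul : ∀ v : V, (0 : B) • v = (0 : V)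

variable (B : Type*) {V : Type*} [Semifield B] [ScalarAlgebra B V]

/-- `u` and `v` are dependent if `u = b • v` or `v = b • u` for some scalar `b`. -/
def Dependent (u v : V) : Prop := ∃ b : B, u = b • v ∨ v = b • u

/-- `H` is pair-independent if any two distinct elements of `H` are independent. -/
def PairIndependent (H : Set V) : Prop :=
  ∀ u ∈ H, ∀ v ∈ H, u ≠ v → ¬ Dependent B u v

/-- `H` generates the `B`-scalar algebra `(V, 0)`, i.e. `B • H = V`. -/
def Generates (H : Set V) : Prop := ∀ v : V, ∃ b : B, ∃ u ∈ H, v = b • u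

/-- `(V, 0)` is cancellative: `b₁ • v = b₂ • v` with `v ≠ 0` implies `b₁ = b₂`. -/
def Cancellative : Prop :=
  ∀ (b₁ b₂ : B) (v : V), v ≠ 0 → b₁ • v = b₂ • v → b₁ = b₂

theorem aux_ncard_le (H₁ H₂ : Set V) (h₂fin : H₂.Finite)
    (h₁pi : PairIndependent B H₁) (h₂gen : Generates B H₂) :
    H₁.ncard ≤ H₂.ncard := by
  choose b w hw hbw using h₂gen
  apply Set.ncard_le_ncard_of_injOn w (fun u _ => hw u) _ h₂fin
  intro u₁ h₁ u₂ h₂ heq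
  by_contra hne
  apply h₁pi u₁ h₁ u₂ h₂ hne
  by_cases hb : b u₁ = 0
  · refine ⟨0, Or.inl ?_⟩
    rw [ScalarAlgebra.zero_smul, hbw u₁, hb, ScalarAlgebra.zero_smul]
  · refine ⟨b u₂ * (b u₁)⁻¹, Or.inr ?_⟩
    have e₁ : u₁ = b u₁ • w u₂ := by rw [← heq]; exact hbw u₁
    generalize hc : b u₁ = c at e₁ hb ⊢
    conv_rhs => rw [e₁]
    rw [← ScalarAlgebra.mul_smul, mul_assoc, inv_mul_cancel₀ hb, mul_one, ← hbw u₂]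

/-- Any two finite pair-independent generating sets of a `B`-scalar algebra
have the same cardinality (the degree of `(V, 0)`). -/
theorem pairIndependent_generating_sets_card_eq
    (H₁ H₂ : Set V) (h₁fin : H₁.Finite) (h₂fin : H₂.Finite)
    (h₁pi : PairIndependent B H₁) (h₁gen : Generates B H₁)
    (h₂pi : PairIndependent B H₂) (h₂gen : Generates B H₂) :
    H₁.ncard = H₂.ncard := by
  exact le_antisymm (aux_ncard_le B H₁ H₂ h₂fin h₁pi h₂gen)
    (aux_ncard_le B H₂ H₁ h₁fin h₂pi h₁gen)
end

section
/- Let (V, 0) be a finitely generated B-scalar algebra and (V', 0) a sub-B-scalar algebra of (V, 0) (i.e., V' ⊆ V is closed under scalar multiplication and contains 0). Then (V', 0) is finitely generated and deg((V', 0)) ≤ deg((V, 0)). -/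
variable (B : Type*) {V : Type*} [Semifield B] [ScalarAlgebra B V]

/-- If a nonzero multiple of `h₁` is a multiple of a nonzero multiple of `h₂`,
then `h₁` is a multiple of `h₂`. -/
lemma aux_dep {h₁ h₂ : V} {b₁ b₂ c : B} {x y : V}
    (hx : x = b₁ • h₁) (hy : y = b₂ • h₂) (hx0 : x ≠ 0) (hxy : x = c • y) :
    ∃ d : B, h₁ = d • h₂ := by
  have hb₁ : b₁ ≠ 0 := by
    rintro rfl
    exact hx0 (hx.trans (ScalarAlgebra.zero_smul h₁))
  refine ⟨b₁⁻¹ * (c * b₂), ?_⟩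
  have : (b₁⁻¹ * (c * b₂)) • h₂ = b₁⁻¹ • (c • (b₂ • h₂)) := by
    rw [ScalarAlgebra.mul_smul, ScalarAlgebra.mul_smul]
  rw [this, ← hy, ← hxy, hx, ← ScalarAlgebra.mul_smul,
    inv_mul_cancel₀ hb₁, ScalarAlgebra.one_smul]

/-- A sub-`B`-scalar algebra `(V', 0)` of a finitely generated `B`-scalar algebra
`(V, 0)` is finitely generated, and its degree is at most the degree of `(V, 0)`:
given any finite pair-independent generating set `H` of `(V, 0)`, there is a finite
pair-independent subset `H' ⊆ V'` generating `(V', 0)` with `|H'| ≤ |H|`. -/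
theorem subalgebra_finitely_generated_deg_le
    (V' : Set V) (h0 : (0 : V) ∈ V') (hcl : ∀ (b : B), ∀ v ∈ V', b • v ∈ V')
    (H : Set V) (hfin : H.Finite) (hpi : PairIndependent B H) (hgen : Generates B H) :
    ∃ H' : Set V, H' ⊆ V' ∧ H'.Finite ∧ PairIndependent B H' ∧
      (∀ v ∈ V', ∃ b : B, ∃ u ∈ H', v = b • u) ∧ H'.ncard ≤ H.ncard := by
  classical
  -- H is nonempty since it generates (e.g. 0 is a multiple of some element of H)
  have hHne : H.Nonempty := by
    obtain ⟨b, u, hu, _⟩ := hgen 0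
    exact ⟨u, hu⟩
  set P : V → Prop := fun h => ∃ v, v ∈ V' ∧ v ≠ 0 ∧ ∃ b : B, v = b • h with hP
  set f : V → V := fun h => if hx : P h then hx.choose else 0 with hf
  set T : Set V := {h ∈ H | P h} with hT
  have hTsub : T ⊆ H := fun h hh => hh.1
  have hTfin : T.Finite := hfin.subset hTsub
  have hfspec : ∀ h ∈ T, f h ∈ V' ∧ f h ≠ 0 ∧ ∃ b : B, f h = b • h := by
    intro h hh
    have hx : P h := hh.2
    simp only [hf, dif_pos hx]
    obtain ⟨h1, h2, h3⟩ := hx.choose_spec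
    exact ⟨h1, h2, h3⟩
  by_cases hTne : T.Nonempty
  · refine ⟨f '' T, ?_, hTfin.image f, ?_, ?_, ?_⟩
    · rintro _ ⟨h, hh, rfl⟩
      exact (hfspec h hh).1
    · -- pair independence
      rintro _ ⟨h₁, hh₁, rfl⟩ _ ⟨h₂, hh₂, rfl⟩ hne ⟨c, hc | hc⟩
      · obtain ⟨hV₁, hne₁, b₁, hb₁⟩ := hfspec h₁ hh₁
        obtain ⟨hV₂, hne₂, b₂, hb₂⟩ := hfspec h₂ hh₂
        have hhne : h₁ ≠ h₂ := fun h => hne (by rw [h])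
        obtain ⟨d, hd⟩ := aux_dep B hb₁ hb₂ hne₁ hc
        exact hpi h₁ (hTsub hh₁) h₂ (hTsub hh₂) hhne ⟨d, Or.inl hd⟩
      · obtain ⟨hV₁, hne₁, b₁, hb₁⟩ := hfspec h₁ hh₁
        obtain ⟨hV₂, hne₂, b₂, hb₂⟩ := hfspec h₂ hh₂
        have hhne : h₂ ≠ h₁ := fun h => hne (by rw [h])
        obtain ⟨d, hd⟩ := aux_dep B hb₂ hb₁ hne₂ hc
        exact hpi h₂ (hTsub hh₂) h₁ (hTsub hh₁) hhne ⟨d, Or.inl hd⟩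
    · -- generation
      intro v hv
      by_cases hv0 : v = 0
      · obtain ⟨h₀, hh₀⟩ := hTne
        exact ⟨0, f h₀, ⟨h₀, hh₀, rfl⟩, hv0.trans (ScalarAlgebra.zero_smul (f h₀)).symm⟩
      · obtain ⟨b, h, hh, hbh⟩ := hgen v
        have hhT : h ∈ T := ⟨hh, v, hv, hv0, b, hbh⟩
        obtain ⟨hV₁, hne₁, b', hb'⟩ := hfspec h hhT
        have hb'0 : b' ≠ 0 := by
          rintro rfl
          exact hne₁ (hb'.trans (ScalarAlgebra.zero_smul h))
        refine ⟨b * b'⁻¹, f h, ⟨h, hhT, rfl⟩, ?_⟩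
        rw [hb', ← ScalarAlgebra.mul_smul, mul_assoc, inv_mul_cancel₀ hb'0, mul_one, hbh]
    · exact (Set.ncard_image_le hTfin).trans (Set.ncard_le_ncard hTsub hfin)
  · -- V' = {0}
    have hV'0 : ∀ v ∈ V', v = 0 := by
      intro v hv
      by_contra hv0
      obtain ⟨b, h, hh, hbh⟩ := hgen v
      exact hTne ⟨h, hh, v, hv, hv0, b, hbh⟩
    refine ⟨{0}, by simpa using h0, Set.finite_singleton 0, ?_, ?_, ?_⟩
    · rintro u rfl v rfl hne; exact absurd rfl hne
    · intro v hv
      exact ⟨1, 0, rfl, (hV'0 v hv).trans (ScalarAlgebra.smul_zero 1).symm⟩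
    · rw [Set.ncard_singleton]
      exact (Set.ncard_pos hfin).mpr hHne
end

section
/- Let r : T_Σ → B be a weighted tree language over a commutative semifield B. Then the m-syntactic relation ~_r, defined by b₁.ξ₁ ~_r b₂.ξ₂ iff b₁ ⊗ r(c[ξ₁]) = b₂ ⊗ r(c[ξ₂]) for every context c, is a congruence on the (Σ,B)-scalar algebra of monomials (Mon(Σ,B), 0~, top): it is an equivalence relation compatible with scalar multiplication and with all top-concatenation operations. -/
/-- Trees over a ranked alphabet `(σ, ar)`. -/
inductive RTree (σ : Type) (ar : σ → ℕ) : Type where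
  | node : (s : σ) → (Fin (ar s) → RTree σ ar) → RTree σ ar

/-- Contexts over `(σ, ar)`: trees over `σ ∪ {z}` with exactly one occurrence of the
variable `z`, represented by the path from the root to the occurrence of `z`:
`hole` is the context `z`, and `node s i ch c` is the context
`s(ξ₁,…,ξ_{i-1}, c, ξ_{i+1},…,ξ_k)` where the ground trees `ξ_j` are given by `ch`. -/
inductive RCtx (σ : Type) (ar : σ → ℕ) : Type where
  | hole : RCtx σ ar
  | node : (s : σ) → (i : Fin (ar s)) → (∀ j : Fin (ar s), j ≠ i → RTree σ ar) →
      RCtx σ ar → RCtx σ ar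

variable {σ : Type} {ar : σ → ℕ}

/-- Composition `c₁ ∘_z c₂` of contexts (substitution of `c₂` for `z` in `c₁`). -/
def RCtx.comp : RCtx σ ar → RCtx σ ar → RCtx σ ar
  | .hole, c => c
  | .node s i ch c', c => .node s i ch (c'.comp c)

/-- Substitution `c[ξ]` of the tree `ξ` for the variable `z` in the context `c`. -/
def RCtx.subst : RCtx σ ar → RTree σ ar → RTree σ ar
  | .hole, ξ => ξ
  | .node s i ch c, ξ =>
      .node s (fun j => if h : j = i then c.subst ξ else ch j h)

variable {B : Type*} [Semifield B]

/-- The m-syntactic relation `~_r` of the weighted tree language `r : T_Σ → B` on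
monomials: a monomial `b.ξ` (the map sending `ξ` to `b` and every other tree to `0`)
is represented by the pair `(b, ξ)`, and `b₁.ξ₁ ~_r b₂.ξ₂` iff
`b₁ ⊗ r(c[ξ₁]) = b₂ ⊗ r(c[ξ₂])` for every context `c`. -/
def simr (r : RTree σ ar → B) (m₁ m₂ : B × RTree σ ar) : Prop :=
  ∀ c : RCtx σ ar, m₁.1 * r (c.subst m₁.2) = m₂.1 * r (c.subst m₂.2)

lemma RCtx.comp_subst (c₁ c₂ : RCtx σ ar) (ξ : RTree σ ar) :
    (c₁.comp c₂).subst ξ = c₁.subst (c₂.subst ξ) := by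
  induction c₁ with
  | hole => rfl
  | node s i ch c ih => simp [RCtx.comp, RCtx.subst, ih]

/-- The m-syntactic relation `~_r` is a congruence on the `(Σ,B)`-scalar algebra of
monomials `(Mon(Σ,B), 0~, top)`: it is an equivalence relation, it is compatible with
scalar multiplication `a · (b.ξ) = (a ⊗ b).ξ`, and it is compatible with every
top-concatenation `top(σ)(b₁.ξ₁,…,b_k.ξ_k) = (b₁ ⊗ ⋯ ⊗ b_k).σ(ξ₁,…,ξ_k)`.
(Monomials `b.ξ` are represented by pairs `(b, ξ)`; note that `~_r` relates
`(0, ξ)` and `(0, ζ)` for all `ξ, ζ`, so it respects the identification of all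
pairs `(0, ξ)` with the zero monomial `0~`.) -/
theorem simr_is_congruence (r : RTree σ ar → B) :
    Equivalence (simr r) ∧
    (∀ (a : B) (m₁ m₂ : B × RTree σ ar), simr r m₁ m₂ →
      simr r (a * m₁.1, m₁.2) (a * m₂.1, m₂.2)) ∧
    (∀ (s : σ) (ms ms' : Fin (ar s) → B × RTree σ ar),
      (∀ i, simr r (ms i) (ms' i)) →
      simr r (∏ i, (ms i).1, .node s (fun i => (ms i).2))
             (∏ i, (ms' i).1, .node s (fun i => (ms' i).2))) := by

  refine ⟨⟨fun m c => rfl, fun h c => (h c).symm, fun h1 h2 c => (h1 c).trans (h2 c)⟩, ?_, ?_⟩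
  · intro a m₁ m₂ h c
    simp only [mul_assoc]
    rw [h c]
  · intro s ms ms' h c
    set mix : ℕ → Fin (ar s) → B × RTree σ ar :=
      fun n j => if j.val < n then ms' j else ms j with hmix
    have key : ∀ n, n ≤ ar s →
        (∏ j, (mix n j).1) * r (c.subst (.node s fun j => (mix n j).2)) =
        (∏ j, (ms j).1) * r (c.subst (.node s fun j => (ms j).2)) := by
      intro n
      induction n with
      | zero =>
        intro _
        have : mix 0 = ms := funext fun j => by simp [hmix]
        rw [this]
      | succ n ih =>
        intro hn
        have hn' : n < ar s := hn
        set i : Fin (ar s) := ⟨n, hn'⟩ with hi_def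
        have hmixi : mix n i = ms i := by simp [hmix, hi_def]
        have hmix1i : mix (n+1) i = ms' i := by simp [hmix, hi_def]
        have hmix1 : ∀ j, j ≠ i → mix (n+1) j = mix n j := by
          intro j hj
          have hjn : j.val ≠ n := fun hh => hj (Fin.ext hh)
          simp only [hmix]
          by_cases hlt : j.val < n
          · rw [if_pos hlt, if_pos (Nat.lt_succ_of_lt hlt)]
          · rw [if_neg hlt, if_neg (by omega)]
        set c' : RCtx σ ar := c.comp (.node s i (fun j _ => (mix n j).2) .hole) with hc'
        have hsub : ∀ ξ, c'.subst ξ =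
            c.subst (.node s fun j => if _ : j = i then ξ else (mix n j).2) := by
          intro ξ
          rw [hc', RCtx.comp_subst]
          rfl
        have e1 : (fun j => if _ : j = i then (ms i).2 else (mix n j).2) =
            fun j => (mix n j).2 := funext fun j => by
          by_cases hj : j = i
          · subst hj; simp [hmixi]
          · simp [hj]
        have e2 : (fun j => if _ : j = i then (ms' i).2 else (mix n j).2) =
            fun j => (mix (n+1) j).2 := funext fun j => by
          by_cases hj : j = i
          · subst hj; simp [hmix1i]
          · simp [hj, hmix1 j hj]
        have hi := h i c'
        rw [hsub (ms i).2, hsub (ms' i).2, e1, e2] at hi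
        have perase : ∀ j ∈ Finset.univ.erase i, (mix (n+1) j).1 = (mix n j).1 :=
          fun j hj => by rw [hmix1 j (Finset.ne_of_mem_erase hj)]
        have p1 : ∏ j, (mix (n+1) j).1 =
            (ms' i).1 * ∏ j ∈ Finset.univ.erase i, (mix n j).1 := by
          rw [← Finset.mul_prod_erase Finset.univ _ (Finset.mem_univ i), hmix1i,
            Finset.prod_congr rfl perase]
        have p2 : ∏ j, (mix n j).1 =
            (ms i).1 * ∏ j ∈ Finset.univ.erase i, (mix n j).1 := by
          rw [← Finset.mul_prod_erase Finset.univ _ (Finset.mem_univ i), hmixi]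
        calc (∏ j, (mix (n+1) j).1) * r (c.subst (.node s fun j => (mix (n+1) j).2))
            = (∏ j ∈ Finset.univ.erase i, (mix n j).1) *
              ((ms' i).1 * r (c.subst (.node s fun j => (mix (n+1) j).2))) := by
                rw [p1]; ring
          _ = (∏ j ∈ Finset.univ.erase i, (mix n j).1) *
              ((ms i).1 * r (c.subst (.node s fun j => (mix n j).2))) := by rw [← hi]
          _ = (∏ j, (mix n j).1) * r (c.subst (.node s fun j => (mix n j).2)) := by
                rw [p2]; ring
          _ = _ := ih (Nat.le_of_lt hn')
    have hfin : mix (ar s) = ms' := funext fun j => if_pos j.isLt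
    have := key (ar s) le_rfl
    rw [hfin] at this
    exact this.symm
end

section
/- Let r : T_Σ → B over a commutative semifield. Then the quotient B-scalar algebra Mon(Σ,B)/~_r is cancellative: if [b.ξ] ≠ [0~] and b₁ · [b.ξ] = b₂ · [b.ξ], then b₁ = b₂. -/
variable {σ : Type} {ar : σ → ℕ}

variable {B : Type*} [Semifield B]

/-- The quotient `B`-scalar algebra `Mon(Σ,B)/~_r` is cancellative: if the class of
the monomial `b.ξ` is not the zero class (i.e. `b.ξ` is not `~_r`-related to the
zero monomial, represented by `(0, ξ)`) and `b₁ · [b.ξ] = b₂ · [b.ξ]`, then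
`b₁ = b₂`. -/
theorem simr_quotient_cancellative (r : RTree σ ar → B)
    (b : B) (ξ : RTree σ ar) (b₁ b₂ : B)
    (hnz : ¬ simr r (b, ξ) (0, ξ))
    (h : simr r (b₁ * b, ξ) (b₂ * b, ξ)) :
    b₁ = b₂ := by
  simp only [simr, not_forall] at hnz
  obtain ⟨c, hc⟩ := hnz
  have hc' : b * r (c.subst ξ) ≠ 0 := by simpa using hc
  have := h c
  rcases mul_ne_zero_iff.mp hc' with ⟨hb, hr⟩
  field_simp at this
  tauto
end

section
/- Let r : T_Σ → B over a commutative semifield. The congruence ~_r saturates r, and moreover ~_r is the coarsest congruence on (Mon(Σ,B), 0~, top) which saturates r: every congruence ~ saturating r is contained in ~_r. -/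
variable {σ : Type} {ar : σ → ℕ}

variable {B : Type*} [Semifield B]

/-- A relation `sim` on monomials (represented by pairs `(b, ξ)` for `b.ξ`)
saturates `r` if there is a scalar-linear form `γ` on the quotient `Mon(Σ,B)/sim`
(i.e. a map constant on `sim`-classes with `γ(b · m) = b ⊗ γ(m)`) such that
`r(ξ) = γ([1.ξ])` for all trees `ξ`. -/
def Saturates (r : RTree σ ar → B) (sim : B × RTree σ ar → B × RTree σ ar → Prop) :
    Prop :=
  ∃ γ : B × RTree σ ar → B,
    (∀ m m', sim m m' → γ m = γ m') ∧
    (∀ (b : B) (m : B × RTree σ ar), γ (b * m.1, m.2) = b * γ m) ∧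
    (∀ ξ : RTree σ ar, r ξ = γ (1, ξ))

/-- The m-syntactic congruence `~_r` saturates `r`, and it is the coarsest
congruence on `(Mon(Σ,B), 0~, top)` saturating `r`: every congruence (equivalence
relation compatible with scalar multiplication and all top-concatenations) which
saturates `r` is contained in `~_r`. -/
theorem simr_saturates_and_coarsest (r : RTree σ ar → B) :
    Saturates r (simr r) ∧
    (∀ sim : B × RTree σ ar → B × RTree σ ar → Prop,
      Equivalence sim →
      (∀ (a : B) (m₁ m₂ : B × RTree σ ar), sim m₁ m₂ →
        sim (a * m₁.1, m₁.2) (a * m₂.1, m₂.2)) →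
      (∀ (s : σ) (ms ms' : Fin (ar s) → B × RTree σ ar),
        (∀ i, sim (ms i) (ms' i)) →
        sim (∏ i, (ms i).1, .node s (fun i => (ms i).2))
            (∏ i, (ms' i).1, .node s (fun i => (ms' i).2))) →
      Saturates r sim →
      ∀ m₁ m₂ : B × RTree σ ar, sim m₁ m₂ → simr r m₁ m₂) := by
  constructor
  · refine ⟨fun m => m.1 * r m.2, fun m m' h => h .hole, fun b m => mul_assoc _ _ _,
      fun ξ => (one_mul _).symm⟩
  · rintro sim heq hscal htop ⟨γ, hγeq, hγscal, hγr⟩ m₁ m₂ hsim c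
    have hγ' : ∀ (b : B) (t : RTree σ ar), γ (b, t) = b * r t := by
      intro b t
      have := hγscal b (1, t)
      rw [hγr]
      simpa using this
    have key : ∀ c : RCtx σ ar, ∀ m₁ m₂ : B × RTree σ ar, sim m₁ m₂ →
        sim (m₁.1, c.subst m₁.2) (m₂.1, c.subst m₂.2) := by
      intro c
      induction c with
      | hole => intro m₁ m₂ h; simpa [RCtx.subst] using h
      | node s i ch c ih =>
        intro m₁ m₂ h
        have h' := ih m₁ m₂ h
        have key := htop s (fun j => if hj : j = i then (m₁.1, c.subst m₁.2) else (1, ch j hj))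
          (fun j => if hj : j = i then (m₂.1, c.subst m₂.2) else (1, ch j hj))
          (fun j => by by_cases hj : j = i <;> simp [hj, h', heq.refl])
        have hpair : ∀ (m : B × RTree σ ar),
            ((∏ j, ((fun j => if hj : j = i then (m.1, c.subst m.2)
                else (1, ch j hj)) j).1 : B),
              (RTree.node s fun j => ((fun j => if hj : j = i then (m.1, c.subst m.2)
                else (1, ch j hj)) j).2))
            = (m.1, (RCtx.node s i ch c).subst m.2) := by
          intro m
          refine Prod.ext ?_ ?_
          · dsimp only
            rw [Fintype.prod_eq_single i (fun j hj => by simp [hj])]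
            simp
          · dsimp only
            simp only [RCtx.subst]
            congr 1
            funext j
            by_cases hj : j = i <;> simp [hj]
        rw [hpair m₁, hpair m₂] at key
        exact key
    have := hγeq _ _ (key c m₁ m₂ hsim)
    simpa [hγ'] using this
end

section
/- Let A = (Q, δ, F) be a bottom-up-deterministic (Σ,B)-wta over a commutative semifield. Then ker(h̃_A) ⊆ ~_{⟦A⟧}, where h̃_A : Mon(Σ,B) → B^Q_{≤1} is the scalar-linear homomorphism given by h̃_A(b.ξ) = b · h_A(ξ) and ker(h̃_A) = {(m, m') : h̃_A(m) = h̃_A(m')}. -/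
variable {σ : Type} {ar : σ → ℕ}

variable {B : Type*} [Semifield B] {Q : Type*} [Fintype Q]

/-- The operation `δ_A(σ)` of the vector algebra `V(A) = (B^Q, δ_A)` of the wta
`A = (Q, δ, F)`:
`δ_A(σ)(v₁,…,v_k)_q = ⊕_{q₁⋯q_k ∈ Q^k} (⊗_i (v_i)_{q_i}) ⊗ δ_k(q₁⋯q_k, σ, q)`. -/
def deltaA (δ : (s : σ) → (Fin (ar s) → Q) → Q → B)
    (s : σ) (vs : Fin (ar s) → Q → B) : Q → B :=
  fun q => ∑ w : Fin (ar s) → Q, (∏ i, vs i (w i)) * δ s w q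

/-- `h_A : T_Σ → B^Q`, the unique `Σ`-algebra homomorphism from the term algebra
into the vector algebra of `A`. -/
def hA (δ : (s : σ) → (Fin (ar s) → Q) → Q → B) : RTree σ ar → Q → B
  | .node s ch => deltaA δ s (fun i => hA δ (ch i))

/-- `h_A^C : C_Σ → (B^Q → B^Q)`, the unique monoid homomorphism from the free monoid
of contexts extending the elementary-context action
`g(e)(v) = δ_A(σ)(h_A(ξ₁),…,v,…,h_A(ξ_k))`. -/
def hAC (δ : (s : σ) → (Fin (ar s) → Q) → Q → B) : RCtx σ ar → (Q → B) → Q → B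
  | .hole => id
  | .node s i ch c => fun v =>
      deltaA δ s (fun j => if h : j = i then hAC δ c v else hA δ (ch j h))

/-- `A` is bottom-up-deterministic: for every `σ ∈ Σ^(k)` and `w ∈ Q^k` there is
at most one `q` with `δ_k(w, σ, q) ≠ 0`. -/
def BuDet (δ : (s : σ) → (Fin (ar s) → Q) → Q → B) : Prop :=
  ∀ (s : σ) (w : Fin (ar s) → Q) (q₁ q₂ : Q), δ s w q₁ ≠ 0 → δ s w q₂ ≠ 0 → q₁ = q₂

lemma hA_subst (δ : (s : σ) → (Fin (ar s) → Q) → Q → B) (c : RCtx σ ar) (ξ : RTree σ ar) :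
    hA δ (c.subst ξ) = hAC δ c (hA δ ξ) := by
  induction c with
  | hole => rfl
  | node s i ch c ih =>
    show hA δ (.node s _) = _
    simp only [hA, hAC]
    have : (fun j => hA δ (if h : j = i then c.subst ξ else ch j h))
        = fun j => if h : j = i then hAC δ c (hA δ ξ) else hA δ (ch j h) := by
      funext j
      by_cases hj : j = i <;> simp [hj, ih]
    rw [this]

lemma hAC_smul (δ : (s : σ) → (Fin (ar s) → Q) → Q → B) (c : RCtx σ ar) (b : B) (v : Q → B) :
    hAC δ c (fun q => b * v q) = fun q => b * hAC δ c v q := by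
  induction c with
  | hole => rfl
  | node s i ch c ih =>
    funext q
    simp only [hAC, deltaA, ih, Finset.mul_sum]
    refine Finset.sum_congr rfl fun w _ => ?_
    rw [← mul_assoc]
    congr 1
    have key : (fun j => (if h : j = i then b * hAC δ c v (w j) else hA δ (ch j h) (w j)))
        = fun j => (if j = i then b else 1) * (if h : j = i then hAC δ c v (w j) else hA δ (ch j h) (w j)) := by
      funext j
      by_cases hj : j = i <;> simp [hj]
    simp only [dite_apply]
    rw [key, Finset.prod_mul_distrib]
    congr 1
    simp

/-- For a bottom-up-deterministic wta `A`, `ker(h̃_A) ⊆ ~_{⟦A⟧}`, where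
`h̃_A : Mon(Σ,B) → B^Q_{≤1}` is the scalar-linear homomorphism
`h̃_A(b.ξ) = b · h_A(ξ)` and `⟦A⟧(ξ) = ⊕_q h_A(ξ)_q ⊗ F_q`. -/
theorem ker_htilde_subset_simr
    (δ : (s : σ) → (Fin (ar s) → Q) → Q → B) (F : Q → B) (hdet : BuDet δ)
    (b₁ b₂ : B) (ξ₁ ξ₂ : RTree σ ar)
    (h : (fun q => b₁ * hA δ ξ₁ q) = fun q => b₂ * hA δ ξ₂ q) :
    simr (fun ξ => ∑ q : Q, hA δ ξ q * F q) (b₁, ξ₁) (b₂, ξ₂) := by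
  intro c
  simp only [Finset.mul_sum, hA_subst]
  refine Finset.sum_congr rfl fun q _ => ?_
  rw [← mul_assoc, ← mul_assoc]
  congr 1
  have h1 := congrFun (hAC_smul δ c b₁ (hA δ ξ₁)) q
  have h2 := congrFun (hAC_smul δ c b₂ (hA δ ξ₂)) q
  rw [← h1, ← h2, h]
end
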